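/- Let ξ ∈ (0,1) and η ∈ (ξ,1) be fixed and set M = max( (1 − η²ξ)/(ξ(1−η)²) , ((log ξ)/(log η) + 2)/(η²ξ(1−η)) ). If x ≥ M and {(a_i, b_i] : i = 0,…,d} is the η-covering of (ξx, x], then Σ_{i=0}^{d} (b_i − a_i) ≤ (1 − ξη³) x. -/

import Mathlib

open Filter Topology

/-- `seqB η x i = f^i(⌈x⌉)` where `f(y) = ⌈η y⌉`. -/
noncomputable def seqB (η x : ℝ) (i : ℕ) : ℝ :=
  (fun y : ℝ => ((⌈η * y⌉ : ℤ) : ℝ))^[i] ((⌈x⌉ : ℤ) : ℝ)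

/-- `seqA η x i = η * seqB η x i`. -/
noncomputable def seqA (η x : ℝ) (i : ℕ) : ℝ := η * seqB η x i

private lemma aux_pos_x (c x : ℝ) (hc : 0 < c) (h : 2 ≤ c * x) : 0 < x := by nlinarith

private lemma aux_cancel (B r S : ℝ) (hB : 0 < B) (h : r / B + 2 ≤ S) :
    r + 2 * B ≤ B * S := by
  have h2 := mul_le_mul_of_nonneg_left h hB.le
  have h3 : B * (r / B) = r := by field_simp
  nlinarith [h2, h3]

private lemma aux_zero_case (ξ η x : ℝ) (hη0 : 0 < η)
    (h : 3 * (1 + η) ≤ η ^ 2 * ξ * (1 - η) * x * (1 + η)) :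
    2 ≤ ξ * η * (1 - η ^ 2) * x := by nlinarith

set_option maxHeartbeats 1000000 in
theorem stmt_16 (ξ η x : ℝ) (hξ : ξ ∈ Set.Ioo (0 : ℝ) 1) (hη : η ∈ Set.Ioo ξ 1)
    (hx : max ((1 - η ^ 2 * ξ) / (ξ * (1 - η) ^ 2))
        ((Real.log ξ / Real.log η + 2) / (η ^ 2 * ξ * (1 - η))) ≤ x)
    (d : ℕ) (hd1 : seqA η x d ≤ ξ * x) (hd2 : ∀ i : ℕ, i < d → ξ * x < seqA η x i) :
    ∑ i ∈ Finset.range (d + 1), (seqB η x i - seqA η x i) ≤ (1 - ξ * η ^ 3) * x := by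
  obtain ⟨hξ0, hξ1⟩ := hξ
  obtain ⟨hξη, hη1⟩ := hη
  have hη0 : 0 < η := hξ0.trans hξη
  have h1η : 0 < 1 - η := by linarith
  have hx1 : (1 - η ^ 2 * ξ) / (ξ * (1 - η) ^ 2) ≤ x := le_trans (le_max_left _ _) hx
  have hx2 : (Real.log ξ / Real.log η + 2) / (η ^ 2 * ξ * (1 - η)) ≤ x :=
    le_trans (le_max_right _ _) hx
  clear hx
  have hlogη : Real.log η < 0 := Real.log_neg hη0 hη1
  have hlogξ : Real.log ξ ≤ Real.log η := Real.log_le_log hξ0 hξη.le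
  obtain ⟨A, hA_def⟩ : ∃ a : ℝ, a = -Real.log ξ := ⟨_, rfl⟩
  obtain ⟨B, hB_def⟩ : ∃ b : ℝ, b = -Real.log η := ⟨_, rfl⟩
  have hB : 0 < B := by rw [hB_def]; linarith
  have hAB : B ≤ A := by rw [hA_def, hB_def]; linarith
  have hL : Real.log ξ / Real.log η = A / B := by rw [hA_def, hB_def, neg_div_neg_eq]
  have hLnn : 0 ≤ A / B := div_nonneg (by rw [hA_def]; linarith) hB.le
  have hden2 : 0 < η ^ 2 * ξ * (1 - η) := by positivity
  have hxS : A / B + 2 ≤ η ^ 2 * ξ * (1 - η) * x := by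
    rw [hL] at hx2
    have := (div_le_iff₀ hden2).mp hx2
    linarith [this]
  have hS2 : 2 ≤ η ^ 2 * ξ * (1 - η) * x := by linarith [hLnn]
  have hx0 : 0 < x := aux_pos_x _ _ hden2 hS2
  have hBη : 1 - η ≤ B := by
    have := Real.log_le_sub_one_of_pos hη0
    rw [hB_def]; linarith
  have hξx0 : 0 < ξ * x := by positivity
  have hA2B : A + 2 * B ≤ B * (η ^ 2 * ξ * (1 - η) * x) := aux_cancel B A _ hB hxS
  have hx1' : 1 - η ^ 3 ≤ ξ * (1 - η) ^ 2 * x := by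
    have h := (div_le_iff₀ (by positivity : (0:ℝ) < ξ * (1 - η) ^ 2)).mp hx1
    have h2 : (0:ℝ) ≤ η ^ 2 * (η - ξ) := mul_nonneg (sq_nonneg η) (by linarith)
    linarith [h, h2]
  -- basics about seqB
  have hb_succ : ∀ i, seqB η x (i + 1) = ((⌈η * seqB η x i⌉ : ℤ) : ℝ) := by
    intro i
    rw [seqB, Function.iterate_succ_apply']
    rfl
  have hb0 : seqB η x 0 = ((⌈x⌉ : ℤ) : ℝ) := rfl
  have hbpos : ∀ i, 0 < seqB η x i := by
    intro i
    induction i with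
    | zero => rw [hb0]; exact hx0.trans_le (Int.le_ceil x)
    | succ n ih =>
      rw [hb_succ]
      exact (by positivity : (0:ℝ) < η * seqB η x n).trans_le (Int.le_ceil _)
  have hb_ge : ∀ i, η * seqB η x i ≤ seqB η x (i + 1) := by
    intro i; rw [hb_succ]; exact Int.le_ceil _
  have hb_le : ∀ i, seqB η x (i + 1) ≤ η * seqB η x i + 1 := by
    intro i; rw [hb_succ]; exact (Int.ceil_lt_add_one _).le
  have hbd : ξ * x ≤ seqB η x d := by
    cases d with
    | zero =>
      rw [hb0]
      have h1 : ξ * x ≤ 1 * x := mul_le_mul_of_nonneg_right hξ1.le hx0.le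
      have h2 : ξ * x ≤ x := by linarith
      exact h2.trans ((Int.le_ceil x))
    | succ m =>
      have h1 := hd2 m (Nat.lt_succ_self m)
      have h2 := hb_ge m
      rw [seqA] at h1
      linarith
  -- the key bound : d + 2 ≤ ξ η (1-η²) x
  have hT : (d : ℝ) + 2 ≤ ξ * η * (1 - η ^ 2) * x := by
    cases d with
    | zero =>
      have h3B : B * 3 ≤ B * (η ^ 2 * ξ * (1 - η) * x) := by linarith
      have hS3 : 3 ≤ η ^ 2 * ξ * (1 - η) * x := (mul_le_mul_iff_of_pos_left hB).mp h3B
      have hS3' := mul_le_mul_of_nonneg_right hS3 (by linarith : (0:ℝ) ≤ 1 + η)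
      push_cast
      linarith [aux_zero_case ξ η x hη0 hS3']
    | succ m =>
      obtain ⟨u, hu_def⟩ : ∃ u : ℝ, u = 1 / (ξ * x) := ⟨_, rfl⟩
      have hu0 : 0 < u := by rw [hu_def]; positivity
      have hu1 : u * (ξ * x) = 1 := by rw [hu_def]; field_simp
      obtain ⟨ρ, hρ_def⟩ : ∃ r : ℝ, r = η * (1 + u) := ⟨_, rfl⟩
      have hρ0 : 0 < ρ := by rw [hρ_def]; positivity
      have claim : ∀ i, i < m + 1 → seqA η x i ≤ seqA η x 0 * ρ ^ i := by
        intro i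
        induction i with
        | zero => intro _; simp
        | succ n ih =>
          intro hn
          have hn' : n < m + 1 := by omega
          have h1 := ih hn'
          have h2 : ξ * x < seqA η x n := hd2 n hn'
          have h3 : seqA η x (n + 1) ≤ η * seqA η x n + η := by
            have hbl := mul_le_mul_of_nonneg_left (hb_le n) hη0.le
            rw [seqA, seqA]
            linarith
          have h4 : η * seqA η x n + η ≤ ρ * seqA η x n := by
            have key := mul_le_mul_of_nonneg_left h2.le
              (mul_nonneg hη0.le hu0.le)
            -- key : η * u * (ξ * x) ≤ η * u * seqA η x n
            have e : η * u * (ξ * x) = η := by rw [mul_assoc, hu1]; ring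
            rw [hρ_def]
            linarith [key, e]
          have h5 : ρ * seqA η x n ≤ ρ * (seqA η x 0 * ρ ^ n) :=
            mul_le_mul_of_nonneg_left h1 hρ0.le
          calc seqA η x (n + 1) ≤ ρ * seqA η x n := h3.trans h4
            _ ≤ ρ * (seqA η x 0 * ρ ^ n) := h5
            _ = seqA η x 0 * ρ ^ (n + 1) := by ring
      have hkey : ξ * x < η * (x + 1) * ρ ^ m := by
        have h1 : ξ * x < seqA η x m := hd2 m (Nat.lt_succ_self m)
        have h2 := claim m (Nat.lt_succ_self m)
        have h3 : seqA η x 0 ≤ η * (x + 1) := by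
          rw [seqA, hb0]
          have h4 := mul_le_mul_of_nonneg_left (Int.ceil_lt_add_one x).le hη0.le
          linarith
        have hρm : (0:ℝ) ≤ ρ ^ m := by positivity
        calc ξ * x < seqA η x m := h1
          _ ≤ seqA η x 0 * ρ ^ m := h2
          _ ≤ η * (x + 1) * ρ ^ m := mul_le_mul_of_nonneg_right h3 hρm
      -- passing to logarithms
      have hinvx0 : (0:ℝ) < 1 / x := by positivity
      obtain ⟨ε1, hε1_def⟩ : ∃ e : ℝ, e = Real.log (1 + 1 / x) := ⟨_, rfl⟩
      obtain ⟨ε2, hε2_def⟩ : ∃ e : ℝ, e = Real.log (1 + u) := ⟨_, rfl⟩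
      have hx0' : (0:ℝ) < 1 + 1 / x := by positivity
      have hu0' : (0:ℝ) < 1 + u := by positivity
      have hε1nn : 0 ≤ ε1 := hε1_def ▸ Real.log_nonneg (le_add_of_nonneg_right hinvx0.le)
      have hε2nn : 0 ≤ ε2 := hε2_def ▸ Real.log_nonneg (le_add_of_nonneg_right hu0.le)
      have hε1le : ε1 ≤ 1 / x := by
        have := Real.log_le_sub_one_of_pos hx0'
        rw [hε1_def]; linarith
      have hε2le : ε2 ≤ u := by
        have := Real.log_le_sub_one_of_pos hu0'
        rw [hε2_def]; linarith
      -- ε1 ≤ B/2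
      have hε1B : 2 * ε1 ≤ B := by
        have h2w : 2 / x ≤ η ^ 2 * ξ * (1 - η) := by
          rw [div_le_iff₀ hx0]; linarith
        have hη2 : η ^ 2 ≤ 1 := pow_le_one₀ hη0.le hη1.le
        have hnn : 0 ≤ 1 - η ^ 2 * ξ := by
          have := mul_le_one₀ hη2 hξ0.le hξ1.le
          linarith
        have hc1 : η ^ 2 * ξ * (1 - η) ≤ 1 - η := by
          linarith [mul_nonneg h1η.le hnn]
        have h1x2 : 2 * (1 / x) = 2 / x := by ring
        linarith [hBη, hε1le]
      -- ε2 (1+η+η²) ≤ B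
      have hε2B : ε2 * (1 + η + η ^ 2) ≤ B := by
        have h1 : ε2 * (ξ * x) ≤ 1 := by
          have := mul_le_mul_of_nonneg_right hε2le hξx0.le
          linarith [hu1]
        have h3' : (1 + η + η ^ 2) * (1 - η) ≤ (ξ * (1 - η) * x) * (1 - η) := by
          linarith [hx1']
        have h3 : 1 + η + η ^ 2 ≤ ξ * (1 - η) * x := le_of_mul_le_mul_right h3' h1η
        have h4 := mul_le_mul_of_nonneg_left h3 hε2nn
        have h5 := mul_le_mul_of_nonneg_left h1 h1η.le
        linarith [h4, h5, hBη]
      have hlog : Real.log (ξ * x) < Real.log (η * (x + 1)) + (m : ℝ) * Real.log ρ := by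
        have h := Real.log_lt_log hξx0 hkey
        rw [Real.log_mul (by positivity : η * (x + 1) ≠ 0) (by positivity : ρ ^ m ≠ 0),
          Real.log_pow] at h
        exact h
      have e1 : Real.log (ξ * x) = -A + Real.log x := by
        rw [Real.log_mul hξ0.ne' hx0.ne', hA_def]; ring
      have e2 : Real.log (η * (x + 1)) = -B + Real.log x + ε1 := by
        rw [Real.log_mul hη0.ne' (by positivity : x + 1 ≠ 0), hB_def]
        have hxx : Real.log (x + 1) = Real.log x + ε1 := by
          rw [hε1_def, ← Real.log_mul hx0.ne' hx0'.ne']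
          congr 1
          field_simp
        rw [hxx]; ring
      have e3 : Real.log ρ = -B + ε2 := by
        rw [hρ_def, Real.log_mul hη0.ne' hu0'.ne', hB_def, hε2_def]; ring
      rw [e1, e2, e3] at hlog
      have hmain : (m : ℝ) * (B - ε2) ≤ A - B + ε1 := by linarith [hlog]
      have hm0 : (0:ℝ) ≤ (m : ℝ) := Nat.cast_nonneg m
      -- combine everything
      have s1 : (m : ℝ) * (B * (η + η ^ 2)) ≤ (m : ℝ) * ((B - ε2) * (1 + η + η ^ 2)) := by
        apply mul_le_mul_of_nonneg_left _ hm0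
        linarith [hε2B]
      have s2 : (m : ℝ) * ((B - ε2) * (1 + η + η ^ 2)) ≤ (A - B + ε1) * (1 + η + η ^ 2) := by
        have hpos : (0:ℝ) < 1 + η + η ^ 2 := by positivity
        have := mul_le_mul_of_nonneg_right hmain hpos.le
        linarith [this]
      have s3 : (A - B + ε1) * (1 + η + η ^ 2) ≤ (A - B / 2) * (1 + η) ^ 2 := by
        have ha : (0:ℝ) ≤ A - B / 2 := by linarith
        have hp1 : (0:ℝ) ≤ (B / 2 - ε1) * (1 + η + η ^ 2) :=
          mul_nonneg (by linarith) (by positivity)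
        have hp2 : (0:ℝ) ≤ (A - B / 2) * η := mul_nonneg ha hη0.le
        linarith [hp1, hp2]
      have s4 : ((m : ℝ) + 3) * (η * B * (1 + η)) ≤ (A + 2 * B) * (1 + η) ^ 2 := by
        have hmb : (m : ℝ) * (B * (η + η ^ 2)) ≤ (A - B / 2) * (1 + η) ^ 2 :=
          s1.trans (s2.trans s3)
        have hp3 : (0:ℝ) ≤ B * (1 + η) * (5 / 2 - η / 2) :=
          mul_nonneg (mul_nonneg hB.le (by linarith)) (by linarith)
        linarith [hmb, hp3]
      have s5 : (A + 2 * B) * (1 + η) ^ 2 ≤ (ξ * η * (1 - η ^ 2) * x) * (η * B * (1 + η)) := by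
        have := mul_le_mul_of_nonneg_right hA2B (sq_nonneg (1 + η))
        linarith [this]
      have s6 := s4.trans s5
      have hpos : (0:ℝ) < η * B * (1 + η) := by positivity
      have hfin := (mul_le_mul_iff_of_pos_right hpos).mp s6
      push_cast
      linarith
  -- now the sum estimate
  have hsum1 : ∑ i ∈ Finset.range (d + 1), (seqB η x i - seqA η x i) ≤
      ∑ i ∈ Finset.range (d + 1), (seqB η x i - seqB η x (i + 1) + 1) := by
    apply Finset.sum_le_sum
    intro i _
    rw [seqA]
    linarith [hb_le i]
  have hsum2 : ∑ i ∈ Finset.range (d + 1), (seqB η x i - seqB η x (i + 1) + 1) =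
      seqB η x 0 - seqB η x (d + 1) + (d + 1) := by
    rw [Finset.sum_add_distrib, Finset.sum_range_sub' (fun i => seqB η x i) (d + 1)]
    simp
  have hb0le : seqB η x 0 ≤ x + 1 := by
    rw [hb0]; exact (Int.ceil_lt_add_one x).le
  have hbd1 : η * (ξ * x) ≤ seqB η x (d + 1) := by
    have h1 := hb_ge d
    have h2 := mul_le_mul_of_nonneg_left hbd hη0.le
    linarith
  have hsum := hsum1.trans_eq hsum2
  linarith [hsum, hT, hb0le, hbd1]
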